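/- Consider the action of S_3 × S_3 × S_3 on Fin 3 × Fin 6 where the first factor permutes rows, the second permutes columns {0,1,2}, and the third permutes columns {3,4,5}. Let K be the 5-coloring of the 3×6 grid defined by K(i,j) = (j−i) mod 3 for j < 3 (colors 0,1,2), K(i,j) = 3 if j = i+3, and K(i,j) = 4 otherwise. Then the stabilizer of K (elements preserving every color class setwise) is exactly the diagonal cyclic group {(ρ^c, ρ^c, ρ^c) : c ∈ ZMod 3} where ρ is the 3-cycle x ↦ x+1, and this group has exactly 6 orbits on the grid. In particular, K (which has 5 colors) is not the orbit coloring of any subgroup of S_3 × S_3 × S_3. -/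

import Mathlib

/-- Nodes of the 3×6 grid: `(i, b, j)` is the node in row `i`, in region A if
`b = false` (columns 0–2, identified with `ZMod 3`) and region B if `b = true`
(columns 3–5, identified with `ZMod 3`). -/
abbrev Node36 := ZMod 3 × Bool × ZMod 3

/-- The 5-coloring: region A is colored by `j - i` (colors 0,1,2);
region B has color 3 on the diagonal `j = i` and color 4 elsewhere. -/
def K36 (x : Node36) : Fin 5 :=
  if x.2.1 = false then
    ⟨(x.2.2 - x.1).val, lt_of_lt_of_le (ZMod.val_lt _) (by norm_num)⟩
  else if x.2.2 = x.1 then 3 else 4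

/-- The action of `S₃ × S₃ × S₃`: the first factor permutes rows, the second
permutes the columns of region A, the third permutes the columns of region B. -/
def act36 (g : Equiv.Perm (ZMod 3) × Equiv.Perm (ZMod 3) × Equiv.Perm (ZMod 3))
    (x : Node36) : Node36 :=
  (g.1 x.1, x.2.1, if x.2.1 = false then g.2.1 x.2.2 else g.2.2 x.2.2)

lemma part1 : ∀ g : Equiv.Perm (ZMod 3) × Equiv.Perm (ZMod 3) × Equiv.Perm (ZMod 3),
        (∀ x : Node36, K36 (act36 g x) = K36 x) ↔
          ∃ c : ZMod 3, (∀ x, g.1 x = x + c) ∧ (∀ x, g.2.1 x = x + c) ∧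
            (∀ x, g.2.2 x = x + c) := by
  set_option maxRecDepth 10000 in decide

def sig3 (c : ZMod 3) : Equiv.Perm (ZMod 3) × Equiv.Perm (ZMod 3) × Equiv.Perm (ZMod 3) :=
  (Equiv.addRight c, Equiv.addRight c, Equiv.addRight c)

def orbF (x : Node36) : Finset Node36 :=
  Finset.univ.filter (fun y => ∃ c : ZMod 3, act36 (sig3 c) x = y)

lemma hD (x y : Node36) :
    (∃ g, (∀ z, K36 (act36 g z) = K36 z) ∧ act36 g x = y) ↔
      ∃ c : ZMod 3, act36 (sig3 c) x = y := by
  constructor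
  · rintro ⟨g, hg, rfl⟩
    obtain ⟨c, h1, h2, h3⟩ := (part1 g).1 hg
    exact ⟨c, by simp [act36, sig3, h1, h2, h3, Equiv.coe_addRight]⟩
  · rintro ⟨c, rfl⟩
    refine ⟨sig3 c, (part1 _).2 ⟨c, ?_, ?_, ?_⟩, rfl⟩ <;> intro x <;> rfl

theorem K36_exotic :
    (∀ g : Equiv.Perm (ZMod 3) × Equiv.Perm (ZMod 3) × Equiv.Perm (ZMod 3),
        (∀ x : Node36, K36 (act36 g x) = K36 x) ↔
          ∃ c : ZMod 3, (∀ x, g.1 x = x + c) ∧ (∀ x, g.2.1 x = x + c) ∧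
            (∀ x, g.2.2 x = x + c)) ∧
    {s : Set Node36 | ∃ x : Node36,
        s = {y | ∃ g, (∀ z, K36 (act36 g z) = K36 z) ∧ act36 g x = y}}.ncard = 6 ∧
    ¬ ∃ Sig : Subgroup (Equiv.Perm (ZMod 3) × Equiv.Perm (ZMod 3) × Equiv.Perm (ZMod 3)),
        ∀ x y : Node36, (∃ g ∈ Sig, act36 g x = y) ↔ K36 x = K36 y := by
  refine ⟨part1, ?_, ?_⟩
  · have hset : {s : Set Node36 | ∃ x : Node36,
        s = {y | ∃ g, (∀ z, K36 (act36 g z) = K36 z) ∧ act36 g x = y}}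
        = (fun t : Finset Node36 => (t : Set Node36)) '' (↑(Finset.univ.image orbF) : Set (Finset Node36)) := by
      ext s
      simp only [Set.mem_setOf_eq, Set.mem_image, Finset.coe_image, Finset.coe_univ,
        Set.image_univ, Set.mem_range, exists_exists_eq_and]
      have horb : ∀ x : Node36, {y | ∃ g, (∀ z, K36 (act36 g z) = K36 z) ∧ act36 g x = y}
          = ↑(orbF x) := by
        intro x; ext y
        simp only [Set.mem_setOf_eq, orbF, Finset.coe_filter, Finset.mem_univ, true_and]
        exact hD x y
      constructor
      · rintro ⟨x, rfl⟩; exact ⟨x, (horb x).symm⟩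
      · rintro ⟨x, rfl⟩; exact ⟨x, (horb x).symm⟩
    rw [hset, Set.ncard_image_of_injective _ Finset.coe_injective,
      Set.ncard_coe_finset]
    set_option maxRecDepth 10000 in decide
  · rintro ⟨Sig, hSig⟩
    obtain ⟨g, hgS, he⟩ := (hSig ((0:ZMod 3), true, (1:ZMod 3)) (1, true, 0)).2 (by decide)
    have hg : ∀ z, K36 (act36 g z) = K36 z := fun z =>
      ((hSig z (act36 g z)).1 ⟨g, hgS, rfl⟩).symm
    obtain ⟨c, h1, h2, h3⟩ := (part1 g).1 hg
    have e1 : g.1 0 = (1 : ZMod 3) := congrArg Prod.fst he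
    have e2 : g.2.2 1 = (0 : ZMod 3) := congrArg (Prod.snd ∘ Prod.snd) he
    rw [h1] at e1; rw [h3] at e2
    simp only [zero_add] at e1
    rw [e1] at e2
    exact absurd e2 (by decide)
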